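/- Let R be a commutative ring, 𝔗 a torsion theory over R, 𝔞 a finitely generated ideal of R, and M an R-module. If x ∈ 𝔞 is a weak M-regular element with respect to 𝔗 (i.e., (0 :_M x) ∈ 𝔗), then 𝔗-Kgrade_R(𝔞,M) = 𝔗-Kgrade_R(𝔞,M/xM) + 1. -/

import Mathlib

open CategoryTheory

universe u

noncomputable section

/-- A torsion theory over `R`: a class of `R`-modules closed under isomorphism, submodules,
quotient modules, extensions, and directed colimits (formulated as closure under directed
unions of submodules). -/
structure IsTorsionTheory (R : Type u) [CommRing R] (T : Set (ModuleCat.{u} R)) : Prop where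
  mem_of_iso : ∀ {N N' : ModuleCat.{u} R}, (N ≅ N') → N ∈ T → N' ∈ T
  submodule_mem : ∀ {N : ModuleCat.{u} R}, N ∈ T → ∀ S : Submodule R N,
    ModuleCat.of R S ∈ T
  quotient_mem : ∀ {N : ModuleCat.{u} R}, N ∈ T → ∀ S : Submodule R N,
    ModuleCat.of R (N ⧸ S) ∈ T
  ext_mem : ∀ {N : ModuleCat.{u} R} (S : Submodule R N),
    ModuleCat.of R S ∈ T → ModuleCat.of R (N ⧸ S) ∈ T → N ∈ T
  directed_mem : ∀ {N : ModuleCat.{u} R} {ι : Type u} [Nonempty ι] (S : ι → Submodule R N),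
    Directed (· ≤ ·) S → (∀ i, ModuleCat.of R (S i) ∈ T) → iSup S = ⊤ → N ∈ T

variable {R : Type u} [CommRing R]

/-- The "outgoing" differential of the Koszul cocomplex `Hom_R(K_•(x), M)`, whose degree `i`
component is indexed by the `i`-element subsets of `{1, …, r}`. -/
def koszulDiff {r : ℕ} (x : Fin r → R) (M : Type u) [AddCommGroup M] [Module R M] (i : ℕ) :
    ({s : Finset (Fin r) // s.card = i} → M) →ₗ[R]
      ({s : Finset (Fin r) // s.card = i + 1} → M) where
  toFun φ t := ∑ j ∈ t.1.attach,
    ((-1 : R) ^ (t.1.filter (fun k => k < j.1)).card * x j.1) •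
      φ ⟨t.1.erase j.1, by simp [Finset.card_erase_of_mem j.2, t.2]⟩
  map_add' φ ψ := by
    funext t
    simp [Finset.sum_add_distrib, smul_add]
  map_smul' c φ := by
    funext t
    simp [Finset.smul_sum, smul_comm c]

/-- The "incoming" differential of the Koszul cocomplex in degree `i`
(its source is trivial when `i = 0`). -/
def koszulDiffIn {r : ℕ} (x : Fin r → R) (M : Type u) [AddCommGroup M] [Module R M] (i : ℕ) :
    ({s : Finset (Fin r) // s.card + 1 = i} → M) →ₗ[R]
      ({s : Finset (Fin r) // s.card = i} → M) where
  toFun φ t := ∑ j ∈ t.1.attach,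
    ((-1 : R) ^ (t.1.filter (fun k => k < j.1)).card * x j.1) •
      φ ⟨t.1.erase j.1, by rw [Finset.card_erase_add_one j.2]; exact t.2⟩
  map_add' φ ψ := by
    funext t
    simp [Finset.sum_add_distrib, smul_add]
  map_smul' c φ := by
    funext t
    simp [Finset.smul_sum, smul_comm c]

/-- The `i`-th Koszul cohomology `H^i(x; M)` of `M` with respect to `x₁, …, x_r`, i.e. the
`i`-th cohomology of the cocomplex `Hom_R(K_•(x), M)`. -/
abbrev koszulCohomology {r : ℕ} (x : Fin r → R) (M : Type u) [AddCommGroup M] [Module R M]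
    (i : ℕ) : Type u :=
  ↥(LinearMap.ker (koszulDiff x M i)) ⧸
    (Submodule.comap (LinearMap.ker (koszulDiff x M i)).subtype
      (LinearMap.range (koszulDiffIn x M i)))

/-- The `𝔗`-Koszul grade of the ideal `(x₁, …, x_r)` on `M`: the infimum of the set of `i`
such that `H^i(x; M) ∉ 𝔗` (with `inf ∅ = +∞`). -/
def TKgrade (T : Set (ModuleCat.{u} R)) {r : ℕ} (x : Fin r → R) (M : Type u)
    [AddCommGroup M] [Module R M] : ℕ∞ :=
  sInf ((↑· : ℕ → ℕ∞) '' {i | ModuleCat.of R (koszulCohomology x M i) ∉ T})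

namespace TKaux
variable {R : Type u} [CommRing R]
variable {r : ℕ}

/-- sign -/
def eps (R : Type u) [CommRing R] {r : ℕ} (t : Finset (Fin r)) (j : Fin r) : R :=
  (-1 : R) ^ (t.filter (fun k => k < j)).card

lemma eps_mul_self (t : Finset (Fin r)) (j : Fin r) : eps R t j * eps R t j = 1 := by
  rw [eps, ← pow_add]
  exact Even.neg_one_pow ⟨_, rfl⟩

lemma eps_erase_self (t : Finset (Fin r)) (j : Fin r) : eps R (t.erase j) j = eps R t j := by
  unfold eps
  rw [Finset.filter_erase, Finset.erase_eq_of_notMem]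
  simp

lemma eps_erase_of_not_lt {k j : Fin r} (t : Finset (Fin r)) (h : ¬ k < j) :
    eps R (t.erase k) j = eps R t j := by
  unfold eps
  rw [Finset.filter_erase, Finset.erase_eq_of_notMem]
  simp [h]

lemma eps_erase_of_lt {k j : Fin r} {t : Finset (Fin r)} (hk : k ∈ t) (h : k < j) :
    eps R (t.erase k) j = - eps R t j := by
  unfold eps
  rw [Finset.filter_erase, Finset.card_erase_of_mem (by simp [hk, h])]
  have h1 : 0 < (t.filter (fun m => m < j)).card :=
    Finset.card_pos.mpr ⟨k, by simp [hk, h]⟩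
  obtain ⟨m, hm⟩ : ∃ m, (t.filter (fun m => m < j)).card = m + 1 :=
    ⟨_, (Nat.succ_pred_eq_of_pos h1).symm⟩
  rw [hm, pow_succ]
  simp only [Nat.add_sub_cancel]
  ring

lemma eps_insert_of_not_lt {k j : Fin r} (t : Finset (Fin r)) (h : ¬ j < k) :
    eps R (insert j t) k = eps R t k := by
  unfold eps
  rw [Finset.filter_insert, if_neg h]

lemma eps_insert_of_lt {k j : Fin r} {t : Finset (Fin r)} (hj : j ∉ t) (h : j < k) :
    eps R (insert j t) k = - eps R t k := by
  unfold eps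
  rw [Finset.filter_insert, if_pos h, Finset.card_insert_of_notMem (by simp [hj])]
  rw [pow_succ]
  ring

/-- key antisymmetry for d∘d = 0 -/
lemma eps_swap {j k : Fin r} {t : Finset (Fin r)} (hj : j ∈ t) (hk : k ∈ t) (hjk : j ≠ k) :
    eps R t j * eps R (t.erase j) k = -(eps R t k * eps R (t.erase k) j) := by
  rcases lt_or_gt_of_ne hjk with h | h
  · rw [eps_erase_of_lt hj h, eps_erase_of_not_lt t (not_lt_of_gt h)]
    ring
  · rw [eps_erase_of_lt hk h, eps_erase_of_not_lt t (not_lt_of_gt h)]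
    ring

/-- key antisymmetry for the homotopy -/
lemma eps_swap' {j k : Fin r} {t : Finset (Fin r)} (hj : j ∉ t) (hk : k ∈ t) :
    eps R t j * eps R (insert j t) k = -(eps R t k * eps R (t.erase k) j) := by
  have hjk : j ≠ k := fun h => hj (h ▸ hk)
  rcases lt_or_gt_of_ne hjk with h | h
  · rw [eps_insert_of_lt hj h, eps_erase_of_not_lt t (not_lt_of_gt h)]
    ring
  · rw [eps_insert_of_not_lt t (not_lt_of_gt h), eps_erase_of_lt hk h]
    ring

/-- extension of a subtype-indexed family to all finsets -/
def ext0 {M : Type u} [AddCommGroup M] (i : ℕ) (φ : {s : Finset (Fin r) // s.card = i} → M)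
    (s : Finset (Fin r)) : M :=
  if h : s.card = i then φ ⟨s, h⟩ else 0

lemma ext0_card {M : Type u} [AddCommGroup M] {i : ℕ}
    (φ : {s : Finset (Fin r) // s.card = i} → M) {s : Finset (Fin r)}
    (h : s.card = i) : ext0 i φ s = φ ⟨s, h⟩ := dif_pos h

variable (x : Fin r → R) (M : Type u) [AddCommGroup M] [Module R M]

lemma koszulDiff_apply (i : ℕ) (φ : {s : Finset (Fin r) // s.card = i} → M)
    (t : {s : Finset (Fin r) // s.card = i + 1}) :
    koszulDiff x M i φ t = ∑ j ∈ t.1, (eps R t.1 j * x j) • ext0 i φ (t.1.erase j) := by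
  show ∑ j ∈ t.1.attach, _ = _
  rw [← Finset.sum_attach t.1 (fun j => (eps R t.1 j * x j) • ext0 i φ (t.1.erase j))]
  refine Finset.sum_congr rfl fun j _ => ?_
  rw [ext0_card φ (by simp [Finset.card_erase_of_mem j.2, t.2])]
  rfl


/-- pairwise-antisymmetric double sums vanish -/
lemma sum_pair_antisym {M : Type u} [AddCommGroup M] (t : Finset (Fin r))
    (F : Fin r → Fin r → M)
    (hF : ∀ j ∈ t, ∀ k ∈ t, j ≠ k → F j k + F k j = 0) :
    ∑ j ∈ t, ∑ k ∈ t.erase j, F j k = 0 := by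
  induction t using Finset.induction_on with
  | empty => simp
  | @insert a s ha ih =>
    rw [Finset.sum_insert ha, Finset.erase_insert ha]
    have h1 : ∀ j ∈ s, ∑ k ∈ (insert a s).erase j, F j k
        = F j a + ∑ k ∈ s.erase j, F j k := by
      intro j hj
      have hja : j ≠ a := fun h => ha (h ▸ hj)
      rw [Finset.erase_insert_of_ne hja.symm, Finset.sum_insert (by simp [ha])]
    rw [Finset.sum_congr rfl h1, Finset.sum_add_distrib]
    have h2 : ∑ j ∈ s, ∑ k ∈ s.erase j, F j k = 0 := by
      apply ih
      intro j hj k hk hjk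
      exact hF j (Finset.mem_insert_of_mem hj) k (Finset.mem_insert_of_mem hk) hjk
    rw [h2, add_zero]
    have h3 : ∑ k ∈ s, F a k + ∑ j ∈ s, F j a = 0 := by
      rw [← Finset.sum_add_distrib]
      apply Finset.sum_eq_zero
      intro k hk
      exact hF a (Finset.mem_insert_self a s) k (Finset.mem_insert_of_mem hk)
        (fun h => ha (h ▸ hk))
    exact h3

lemma koszulDiff_comp_apply (i : ℕ) (φ : {s : Finset (Fin r) // s.card = i} → M)
    (t : {s : Finset (Fin r) // s.card = i + 1 + 1}) :
    koszulDiff x M (i + 1) (koszulDiff x M i φ) t = 0 := by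
  rw [koszulDiff_apply]
  have h1 : ∀ j ∈ t.1, (eps R t.1 j * x j) • ext0 (i+1) (koszulDiff x M i φ) (t.1.erase j)
      = ∑ k ∈ t.1.erase j,
        ((eps R t.1 j * x j) * (eps R (t.1.erase j) k * x k)) • ext0 i φ ((t.1.erase j).erase k) := by
    intro j hj
    rw [ext0_card _ (by rw [Finset.card_erase_of_mem hj, t.2]; omega)]
    rw [koszulDiff_apply x M i φ ⟨t.1.erase j, _⟩, Finset.smul_sum]
    exact Finset.sum_congr rfl fun k _ => (smul_smul _ _ _)
  rw [Finset.sum_congr rfl h1]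
  apply sum_pair_antisym
  intro j hj k hk hjk
  rw [Finset.erase_right_comm (s := t.1) (a := k) (b := j)]
  rw [← add_smul,
    show eps R t.1 j * x j * (eps R (t.1.erase j) k * x k)
        + eps R t.1 k * x k * (eps R (t.1.erase k) j * x j) = 0 from by
      linear_combination (x j * x k) * eps_swap (R := R) hj hk hjk,
    zero_smul]

lemma koszulDiff_comp (i : ℕ) :
    (koszulDiff x M (i + 1)).comp (koszulDiff x M i) = 0 := by
  apply LinearMap.ext
  intro φ
  funext t
  exact koszulDiff_comp_apply x M i φ t

/-- contraction operator (interior product with basis vector j) -/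
def contra (j : Fin r) (i : ℕ) :
    ({s : Finset (Fin r) // s.card = i + 1} → M) →ₗ[R] ({s : Finset (Fin r) // s.card = i} → M) where
  toFun φ s := if h : j ∈ s.1 then 0 else
    eps R s.1 j • φ ⟨insert j s.1, by rw [Finset.card_insert_of_notMem h, s.2]⟩
  map_add' φ ψ := by
    funext s
    by_cases h : j ∈ s.1 <;> simp [h, smul_add]
  map_smul' c φ := by
    funext s
    by_cases h : j ∈ s.1 <;> simp [h, smul_comm c]

lemma contra_apply' (j : Fin r) (n : ℕ) (ψ : {s : Finset (Fin r) // s.card = n + 1} → M)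
    (t : {s : Finset (Fin r) // s.card = n}) :
    contra (R := R) M j n ψ t
      = if j ∈ t.1 then 0 else eps R t.1 j • ext0 (n+1) ψ (insert j t.1) := by
  show dite _ _ _ = _
  split_ifs with h
  · rfl
  · rw [ext0_card ψ (by rw [Finset.card_insert_of_notMem h, t.2])]

lemma contra_ext0 (j : Fin r) (n : ℕ) (ψ : {s : Finset (Fin r) // s.card = n + 1} → M)
    {s : Finset (Fin r)} (hs : s.card = n) :
    ext0 n (contra (R := R) M j n ψ) s
      = if j ∈ s then 0 else eps R s j • ext0 (n+1) ψ (insert j s) := by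
  rw [ext0_card _ hs, contra_apply']

lemma contra_identity_succ (j : Fin r) (i : ℕ)
    (φ : {s : Finset (Fin r) // s.card = i + 1} → M) :
    koszulDiff x M i (contra (R := R) M j i φ) + contra (R := R) M j (i+1) (koszulDiff x M (i+1) φ)
      = x j • φ := by
  funext t
  show koszulDiff x M i (contra (R := R) M j i φ) t
    + contra (R := R) M j (i+1) (koszulDiff x M (i+1) φ) t = x j • φ t
  rw [contra_apply', koszulDiff_apply]
  by_cases hj : j ∈ t.1
  · rw [if_pos hj, add_zero]
    rw [Finset.sum_eq_single j]
    · rw [contra_ext0 (R := R) M j i φ (by rw [Finset.card_erase_of_mem hj, t.2]; omega),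
        if_neg (Finset.notMem_erase j t.1), Finset.insert_erase hj,
        ext0_card φ t.2, Subtype.coe_eta, smul_smul, eps_erase_self,
        show eps R t.1 j * x j * eps R t.1 j = x j from by
          linear_combination (x j) * eps_mul_self (R := R) t.1 j]
    · intro k hk hkj
      rw [contra_ext0 (R := R) M j i φ (by rw [Finset.card_erase_of_mem hk, t.2]; omega),
        if_pos (Finset.mem_erase.mpr ⟨fun h => hkj h.symm, hj⟩), smul_zero]
    · intro h
      exact absurd hj h
  · rw [if_neg hj]
    have hcard : (insert j t.1).card = (i + 1) + 1 := by
      rw [Finset.card_insert_of_notMem hj, t.2]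
    rw [ext0_card _ hcard, koszulDiff_apply x M (i+1) φ ⟨insert j t.1, hcard⟩]
    dsimp only
    rw [Finset.sum_insert hj, smul_add]
    have hfirst : eps R t.1 j • ((eps R (insert j t.1) j * x j) •
        ext0 (i+1) φ ((insert j t.1).erase j)) = x j • φ t := by
      rw [Finset.erase_insert hj, ext0_card φ t.2, Subtype.coe_eta,
        smul_smul, eps_insert_of_not_lt t.1 (lt_irrefl j),
        show eps R t.1 j * (eps R t.1 j * x j) = x j from by
          linear_combination (x j) * eps_mul_self (R := R) t.1 j]
    rw [hfirst]
    have hB : ∑ k ∈ t.1, (eps R t.1 k * x k) • ext0 i (contra (R := R) M j i φ) (t.1.erase k)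
        = ∑ k ∈ t.1, ((eps R t.1 k * x k) * eps R (t.1.erase k) j) •
            ext0 (i+1) φ (insert j (t.1.erase k)) := by
      refine Finset.sum_congr rfl fun k hk => ?_
      rw [contra_ext0 (R := R) M j i φ (by rw [Finset.card_erase_of_mem hk, t.2]; omega),
        if_neg (fun h => hj (Finset.mem_of_mem_erase h)), smul_smul]
    rw [hB]
    have hC : eps R t.1 j • ∑ k ∈ t.1, (eps R (insert j t.1) k * x k) •
        ext0 (i+1) φ ((insert j t.1).erase k)
        = ∑ k ∈ t.1, (eps R t.1 j * (eps R (insert j t.1) k * x k)) •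
            ext0 (i+1) φ (insert j (t.1.erase k)) := by
      rw [Finset.smul_sum]
      refine Finset.sum_congr rfl fun k hk => ?_
      rw [smul_smul, Finset.erase_insert_of_ne (by rintro rfl; exact hj hk)]
    rw [hC]
    have hD : ∑ k ∈ t.1, ((eps R t.1 k * x k) * eps R (t.1.erase k) j) •
        ext0 (i+1) φ (insert j (t.1.erase k))
        + ∑ k ∈ t.1, (eps R t.1 j * (eps R (insert j t.1) k * x k)) •
            ext0 (i+1) φ (insert j (t.1.erase k)) = 0 := by
      rw [← Finset.sum_add_distrib]
      apply Finset.sum_eq_zero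
      intro k hk
      rw [← add_smul,
        show eps R t.1 k * x k * eps R (t.1.erase k) j
            + eps R t.1 j * (eps R (insert j t.1) k * x k) = 0 from by
          linear_combination (x k) * eps_swap' (R := R) hj hk,
        zero_smul]
    rw [add_left_comm, hD, add_zero]

lemma contra_identity_zero (j : Fin r) (φ : {s : Finset (Fin r) // s.card = 0} → M) :
    contra (R := R) M j 0 (koszulDiff x M 0 φ) = x j • φ := by
  funext t
  have ht : t.1 = ∅ := Finset.card_eq_zero.mp t.2
  have hj : j ∉ t.1 := by rw [ht]; exact Finset.notMem_empty j
  show contra (R := R) M j 0 (koszulDiff x M 0 φ) t = x j • φ t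
  rw [contra_apply', if_neg hj]
  have hcard : (insert j t.1).card = 0 + 1 := by
    rw [Finset.card_insert_of_notMem hj, t.2]
  rw [ext0_card _ hcard, koszulDiff_apply x M 0 φ ⟨insert j t.1, hcard⟩]
  dsimp only
  rw [Finset.sum_insert hj]
  have hrest : ∑ k ∈ t.1, (eps R (insert j t.1) k * x k) •
      ext0 0 φ ((insert j t.1).erase k) = 0 := by
    rw [ht]
    exact Finset.sum_empty
  rw [hrest, add_zero]
  rw [Finset.erase_insert hj, ext0_card φ t.2, Subtype.coe_eta,
    smul_smul, eps_insert_of_not_lt t.1 (lt_irrefl j),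
    show eps R t.1 j * (eps R t.1 j * x j) = x j from by
      linear_combination (x j) * eps_mul_self (R := R) t.1 j]



----------------------------------------------------------------
-- the Koszul cochain complex and its functoriality
----------------------------------------------------------------
variable (x : Fin r → R)

def kosC (M : Type u) [AddCommGroup M] [Module R M] : CochainComplex (ModuleCat.{u} R) ℕ :=
  CochainComplex.of (fun i => ModuleCat.of R ({s : Finset (Fin r) // s.card = i} → M))
    (fun i => ModuleCat.ofHom (koszulDiff x M i))
    (fun i => by
      apply ModuleCat.hom_ext
      apply LinearMap.ext
      intro φ
      exact LinearMap.congr_fun (koszulDiff_comp x M i) φ)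

lemma kosC_X (M : Type u) [AddCommGroup M] [Module R M] (i : ℕ) :
    (kosC x M).X i = ModuleCat.of R ({s : Finset (Fin r) // s.card = i} → M) := rfl

lemma kosC_d (M : Type u) [AddCommGroup M] [Module R M] (i : ℕ) :
    (kosC x M).d i (i + 1) = ModuleCat.ofHom (koszulDiff x M i) :=
  CochainComplex.of_d (fun i => ModuleCat.of R ({s : Finset (Fin r) // s.card = i} → M))
    (fun i => ModuleCat.ofHom (koszulDiff x M i)) i

lemma ext0_compLeft {A B : Type u} [AddCommGroup A] [AddCommGroup B] [Module R A] [Module R B]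
    (f : A →ₗ[R] B) (i : ℕ) (φ : {s : Finset (Fin r) // s.card = i} → A) (s : Finset (Fin r)) :
    ext0 i (f.compLeft {s : Finset (Fin r) // s.card = i} φ) s = f (ext0 i φ s) := by
  unfold ext0
  split_ifs with h
  · rfl
  · rw [map_zero]

lemma koszulDiff_naturality {A B : Type u} [AddCommGroup A] [AddCommGroup B] [Module R A]
    [Module R B] (f : A →ₗ[R] B) (i : ℕ) (φ : {s : Finset (Fin r) // s.card = i} → A) :
    koszulDiff x B i (f.compLeft _ φ) = f.compLeft _ (koszulDiff x A i φ) := by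
  funext t
  rw [koszulDiff_apply]
  show _ = f (koszulDiff x A i φ t)
  rw [koszulDiff_apply, map_sum]
  refine Finset.sum_congr rfl fun j _ => ?_
  rw [ext0_compLeft, map_smul]

def kosMap {A B : Type u} [AddCommGroup A] [AddCommGroup B] [Module R A] [Module R B]
    (f : A →ₗ[R] B) : kosC x A ⟶ kosC x B where
  f i := ModuleCat.ofHom (f.compLeft {s : Finset (Fin r) // s.card = i})
  comm' i j hij := by
    obtain rfl : i + 1 = j := hij
    rw [kosC_d, kosC_d]
    apply ModuleCat.hom_ext
    apply LinearMap.ext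
    intro φ
    exact koszulDiff_naturality x f i φ

lemma kosMap_comp {A B C : Type u} [AddCommGroup A] [AddCommGroup B] [AddCommGroup C]
    [Module R A] [Module R B] [Module R C] (f : A →ₗ[R] B) (g : B →ₗ[R] C) :
    kosMap x (g.comp f) = kosMap x f ≫ kosMap x g := by
  apply HomologicalComplex.hom_ext
  intro i
  rfl

----------------------------------------------------------------
-- null-homotopy of multiplication by an element of the ideal
----------------------------------------------------------------

def sigmaMap (c : Fin r → R) (M : Type u) [AddCommGroup M] [Module R M] (i : ℕ) :
    ({s : Finset (Fin r) // s.card = i + 1} → M) →ₗ[R]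
      ({s : Finset (Fin r) // s.card = i} → M) :=
  ∑ j : Fin r, c j • contra (R := R) M j i

lemma sigma_identity_succ (c : Fin r → R) (M : Type u) [AddCommGroup M] [Module R M] (i : ℕ)
    (φ : {s : Finset (Fin r) // s.card = i + 1} → M) :
    koszulDiff x M i (sigmaMap c M i φ) + sigmaMap c M (i+1) (koszulDiff x M (i+1) φ)
      = (∑ j : Fin r, c j * x j) • φ := by
  unfold sigmaMap
  rw [LinearMap.sum_apply, map_sum, LinearMap.sum_apply, ← Finset.sum_add_distrib,
    Finset.sum_smul]
  refine Finset.sum_congr rfl fun j _ => ?_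
  rw [LinearMap.smul_apply, LinearMap.smul_apply, map_smul, ← smul_add, mul_smul]
  rw [contra_identity_succ x M j i φ]

lemma sigma_identity_zero (c : Fin r → R) (M : Type u) [AddCommGroup M] [Module R M]
    (φ : {s : Finset (Fin r) // s.card = 0} → M) :
    sigmaMap c M 0 (koszulDiff x M 0 φ) = (∑ j : Fin r, c j * x j) • φ := by
  unfold sigmaMap
  rw [LinearMap.sum_apply, Finset.sum_smul]
  refine Finset.sum_congr rfl fun j _ => ?_
  rw [LinearMap.smul_apply, mul_smul]
  rw [contra_identity_zero x M j φ]

lemma compLeft_lsmul (M : Type u) [AddCommGroup M] [Module R M] (z : R) (i : ℕ)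
    (φ : {s : Finset (Fin r) // s.card = i} → M) :
    (LinearMap.lsmul R M z).compLeft {s : Finset (Fin r) // s.card = i} φ = z • φ := by
  funext s
  rfl

def mulNullHomotopy (c : Fin r → R) (M : Type u) [AddCommGroup M] [Module R M] :
    Homotopy (kosMap x (LinearMap.lsmul R M (∑ j : Fin r, c j * x j))) 0 where
  hom i j :=
    if h : j + 1 = i then
      eqToHom (congrArg (kosC x M).X h.symm) ≫ ModuleCat.ofHom (sigmaMap c M j)
    else 0
  zero i j w := by
    show dite _ _ _ = _
    exact dif_neg fun h => w (by rw [ComplexShape.up_Rel]; exact h)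
  comm i := by
    have hrel : ∀ n : ℕ, (ComplexShape.up ℕ).Rel n (n + 1) := fun n => rfl
    rcases i with _ | n
    · rw [dNext_eq _ (hrel 0), prevD_eq_zero _ 0 (by simp)]
      show _ = _ ≫ (if h : 0 + 1 = 0 + 1 then _ else 0) + 0 + _
      rw [dif_pos rfl]
      simp only [eqToHom_refl, Category.id_comp, kosC_d]
      apply ModuleCat.hom_ext
      apply LinearMap.ext
      intro (φ : {s : Finset (Fin r) // s.card = 0} → M)
      show (LinearMap.lsmul R M (∑ j : Fin r, c j * x j)).compLeft _ φ
        = sigmaMap c M 0 (koszulDiff x M 0 φ) + 0 + 0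
      rw [compLeft_lsmul, sigma_identity_zero x c M φ, add_zero, add_zero]
    · rw [dNext_eq _ (hrel (n+1)), prevD_eq _ (hrel n)]
      show _ = _ ≫ (if h : (n+1) + 1 = (n+1) + 1 then _ else 0)
        + (if h : n + 1 = n + 1 then _ else 0) ≫ _ + _
      rw [dif_pos rfl, dif_pos rfl]
      simp only [eqToHom_refl, Category.id_comp, kosC_d]
      apply ModuleCat.hom_ext
      apply LinearMap.ext
      intro (φ : {s : Finset (Fin r) // s.card = n + 1} → M)
      show (LinearMap.lsmul R M (∑ j : Fin r, c j * x j)).compLeft _ φ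
        = sigmaMap c M (n+1) (koszulDiff x M (n+1) φ)
          + koszulDiff x M n (sigmaMap c M n φ) + 0
      rw [compLeft_lsmul, add_zero, add_comm (sigmaMap c M (n+1) _),
        sigma_identity_succ x c M n φ]

lemma homologyMap_lsmul_eq_zero (M : Type u) [AddCommGroup M] [Module R M] {z : R}
    (hz : z ∈ Ideal.span (Set.range x)) (i : ℕ) :
    HomologicalComplex.homologyMap (kosMap x (LinearMap.lsmul R M z)) i = 0 := by
  obtain ⟨c, hc⟩ := (Submodule.mem_span_range_iff_exists_fun R).mp hz
  have hzc : z = ∑ j : Fin r, c j * x j := by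
    rw [← hc]
    exact Finset.sum_congr rfl fun j _ => (smul_eq_mul (c j) (x j)).symm
  rw [hzc]
  rw [(mulNullHomotopy x c M).homologyMap_eq i]
  exact HomologicalComplex.homologyMap_zero _ _ i


----------------------------------------------------------------
-- identification of the bespoke cohomology with mathlib homology
----------------------------------------------------------------

/-- reindexing equivalence between the two descriptions of degree `n` cochains -/
def reIdx (n : ℕ) :
    ({s : Finset (Fin r) // s.card + 1 = n + 1} → M) ≃ₗ[R]
      ({s : Finset (Fin r) // s.card = n} → M) where
  toFun φ s := φ ⟨s.1, by rw [s.2]⟩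
  invFun ψ s := ψ ⟨s.1, by omega⟩
  left_inv φ := by
    funext s
    exact congrArg φ (Subtype.coe_eta s _)
  right_inv ψ := by
    funext s
    exact congrArg ψ (Subtype.coe_eta s _)
  map_add' φ ψ := rfl
  map_smul' c φ := rfl

lemma range_koszulDiffIn_succ (n : ℕ) :
    LinearMap.range (koszulDiffIn x M (n + 1)) = LinearMap.range (koszulDiff x M n) := by
  have heq : koszulDiffIn x M (n + 1)
      = (koszulDiff x M n).comp (reIdx (R := R) M n).toLinearMap := by
    apply LinearMap.ext
    intro φ
    funext t
    show ∑ j ∈ t.1.attach, _ = ∑ j ∈ t.1.attach, _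
    refine Finset.sum_congr rfl fun j _ => ?_
    rfl
  rw [heq, LinearMap.range_comp, LinearEquiv.range, Submodule.map_top]

lemma range_koszulDiffIn_zero :
    LinearMap.range (koszulDiffIn x M 0) = ⊥ := by
  refine le_antisymm ?_ bot_le
  rintro _ ⟨φ, rfl⟩
  rw [Submodule.mem_bot]
  funext t
  show ∑ j ∈ t.1.attach, _ = (0 : M)
  apply Finset.sum_eq_zero
  intro j _
  exact absurd (t.2 ▸ Finset.card_pos.mpr ⟨(j : Fin r), j.2⟩) (lt_irrefl 0)

lemma ker_sc_g (i : ℕ) :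
    LinearMap.ker ((kosC x M).sc i).g.hom = LinearMap.ker (koszulDiff x M i) := by
  show LinearMap.ker ((kosC x M).d i ((ComplexShape.up ℕ).next i)).hom = _
  rw [show (ComplexShape.up ℕ).next i = i + 1 from CochainComplex.next ℕ i, kosC_d]
  rfl

lemma range_sc_f (i : ℕ) :
    LinearMap.range ((kosC x M).sc i).f.hom = LinearMap.range (koszulDiffIn x M i) := by
  show LinearMap.range ((kosC x M).d ((ComplexShape.up ℕ).prev i) i).hom = _
  rcases i with _ | n
  · rw [CochainComplex.prev_nat_zero, (kosC x M).shape 0 0 (by simp),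
      range_koszulDiffIn_zero]
    exact LinearMap.range_zero
  · rw [CochainComplex.prev_nat_succ, kosC_d, range_koszulDiffIn_succ]
    rfl

lemma range_moduleCatToCycles (S : ShortComplex (ModuleCat.{u} R)) :
    LinearMap.range S.moduleCatToCycles
      = Submodule.comap (LinearMap.ker S.g.hom).subtype (LinearMap.range S.f.hom) := by
  ext b
  constructor
  · rintro ⟨a, rfl⟩
    exact ⟨a, rfl⟩
  · rintro ⟨a, ha⟩
    exact ⟨a, Subtype.ext ha⟩

/-- the bespoke Koszul cohomology agrees with the homology of `kosC`. -/
def bIso (i : ℕ) :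
    ModuleCat.of R (koszulCohomology x M i) ≅ (kosC x M).homology i := by
  refine ?_ ≪≫ ((kosC x M).sc i).moduleCatHomologyIso.symm
  have hker := (ker_sc_g (x := x) (M := M) i).symm
  refine (Submodule.Quotient.equiv _ _ (LinearEquiv.ofEq _ _ hker) ?_).toModuleIso
  rw [range_moduleCatToCycles, range_sc_f (x := x) (M := M) i]
  ext b
  simp only [Submodule.mem_map, Submodule.mem_comap, Submodule.subtype_apply]
  constructor
  · rintro ⟨w, hw, rfl⟩
    exact hw
  · intro hb
    exact ⟨⟨b.1, by rw [hker]; exact b.2⟩, hb, rfl⟩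

----------------------------------------------------------------
-- short exact sequences of Koszul complexes
----------------------------------------------------------------

lemma kosMap_zero {A B : Type u} [AddCommGroup A] [AddCommGroup B] [Module R A] [Module R B] :
    kosMap x (0 : A →ₗ[R] B) = 0 := by
  apply HomologicalComplex.hom_ext
  intro i
  apply ModuleCat.hom_ext
  apply LinearMap.ext
  intro φ
  funext s
  rfl

lemma kosSES {A B C : Type u} [AddCommGroup A] [AddCommGroup B] [AddCommGroup C]
    [Module R A] [Module R B] [Module R C] (f : A →ₗ[R] B) (g : B →ₗ[R] C)
    (hf : Function.Injective f) (hg : Function.Surjective g)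
    (hfg : LinearMap.range f = LinearMap.ker g) :
    (ShortComplex.mk (kosMap x f) (kosMap x g) (by
      rw [← kosMap_comp, show g.comp f = 0 from LinearMap.ext fun a => by
        simp only [LinearMap.comp_apply, LinearMap.zero_apply, ← LinearMap.mem_ker, ← hfg]
        exact ⟨a, rfl⟩, kosMap_zero])).ShortExact := by
  apply HomologicalComplex.shortExact_of_degreewise_shortExact
  intro i
  refine { exact := (ShortComplex.moduleCat_exact_iff _).mpr ?_, mono_f := ?_, epi_g := ?_ }
  · intro φ hφ
    have : ∀ s, φ s ∈ LinearMap.range f := by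
      intro s
      rw [hfg, LinearMap.mem_ker]
      exact congrFun hφ s
    choose ψ hψ using this
    exact ⟨ψ, funext hψ⟩
  · rw [ModuleCat.mono_iff_injective]
    intro φ ψ h
    funext s
    exact hf (congrFun h s)
  · rw [ModuleCat.epi_iff_surjective]
    intro ψ
    choose φ hφ using fun s => hg (ψ s)
    exact ⟨φ, funext hφ⟩


----------------------------------------------------------------
-- torsion-theory closure properties
----------------------------------------------------------------

section Torsion
variable {T : Set (ModuleCat.{u} R)} (hT : IsTorsionTheory R T)

include hT

lemma mem_of_injective {A B : ModuleCat.{u} R} (f : A ⟶ B) (hf : Function.Injective f)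
    (hB : B ∈ T) : A ∈ T :=
  hT.mem_of_iso ((LinearEquiv.ofInjective f.hom hf).toModuleIso).symm
    (hT.submodule_mem hB (LinearMap.range f.hom))

lemma mem_of_surjective {A B : ModuleCat.{u} R} (f : A ⟶ B) (hf : Function.Surjective f)
    (hA : A ∈ T) : B ∈ T :=
  hT.mem_of_iso (f.hom.quotKerEquivOfSurjective hf).toModuleIso
    (hT.quotient_mem hA (LinearMap.ker f.hom))

lemma mem_of_exact {A B C : ModuleCat.{u} R} (f : A ⟶ B) (g : B ⟶ C) (hA : A ∈ T) (hC : C ∈ T)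
    (hfg : ∀ b : B, g b = 0 → b ∈ LinearMap.range f.hom) : B ∈ T := by
  have hker_le : LinearMap.ker g.hom ≤ LinearMap.range f.hom := fun b hb => hfg b hb
  have h1 : ModuleCat.of R ↥(LinearMap.range f.hom) ∈ T :=
    mem_of_surjective hT (ModuleCat.ofHom f.hom.rangeRestrict) f.hom.surjective_rangeRestrict hA
  have h2 : ModuleCat.of R ↥(LinearMap.ker g.hom) ∈ T :=
    mem_of_injective hT (ModuleCat.ofHom (Submodule.inclusion hker_le))
      (Submodule.inclusion_injective hker_le) h1
  have h3 : ModuleCat.of R (B ⧸ LinearMap.ker g.hom) ∈ T :=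
    mem_of_injective hT (ModuleCat.ofHom ((LinearMap.ker g.hom).liftQ g.hom le_rfl))
      (by rw [← LinearMap.ker_eq_bot]
          exact Submodule.ker_liftQ_eq_bot _ _ le_rfl le_rfl) hC
  exact hT.ext_mem (LinearMap.ker g.hom) h2 h3

lemma pi_mem {A : Type u} [AddCommGroup A] [Module R A] (hA : ModuleCat.of R A ∈ T)
    (ι : Type) [Fintype ι] : ModuleCat.of R (ι → A) ∈ T := by
  obtain ⟨n, ⟨e⟩⟩ : ∃ n, Nonempty (ι ≃ Fin n) := ⟨Fintype.card ι, ⟨Fintype.equivFin ι⟩⟩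
  suffices h : ∀ n, ModuleCat.of R (Fin n → A) ∈ T from
    hT.mem_of_iso (LinearEquiv.funCongrLeft R A e).toModuleIso (h n)
  intro n
  induction n with
  | zero =>
    exact mem_of_injective hT (ModuleCat.ofHom (0 : (Fin 0 → A) →ₗ[R] A))
      (fun a b _ => Subsingleton.elim a b) hA
  | succ n ih =>
    apply hT.ext_mem (N := ModuleCat.of R (Fin (n+1) → A))
      (LinearMap.ker (LinearMap.proj (R := R) (φ := fun _ : Fin (n+1) => A) 0))
    · refine mem_of_injective hT (ModuleCat.ofHom ((LinearMap.funLeft R A Fin.succ).comp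
        (LinearMap.ker (LinearMap.proj (R := R) (φ := fun _ : Fin (n+1) => A) 0)).subtype))
        ?_ ih
      intro φ ψ h
      apply Subtype.ext
      funext i
      rcases Fin.eq_zero_or_eq_succ i with hi | ⟨m, hi⟩
      · rw [hi]
        have h1 : φ.1 0 = 0 := φ.2
        have h2 : ψ.1 0 = 0 := ψ.2
        show φ.1 0 = ψ.1 0
        rw [h1, h2]
      · rw [hi]
        exact congrFun h m
    · refine mem_of_injective hT (ModuleCat.ofHom
        ((LinearMap.ker (LinearMap.proj (R := R) (φ := fun _ : Fin (n+1) => A) 0)).liftQ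
          (LinearMap.proj 0) le_rfl)) ?_ hA
      rw [← LinearMap.ker_eq_bot]
      exact Submodule.ker_liftQ_eq_bot _ _ le_rfl le_rfl

end Torsion

----------------------------------------------------------------
-- torsion facts about Koszul cohomology
----------------------------------------------------------------

section KTorsion
variable {T : Set (ModuleCat.{u} R)} (hT : IsTorsionTheory R T)

include hT

lemma koszulCohomology_mem {A : Type u} [AddCommGroup A] [Module R A]
    (hA : ModuleCat.of R A ∈ T) (i : ℕ) :
    ModuleCat.of R (koszulCohomology x A i) ∈ T := by
  have h1 : ModuleCat.of R ({s : Finset (Fin r) // s.card = i} → A) ∈ T :=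
    pi_mem hT hA _
  have h2 : ModuleCat.of R ↥(LinearMap.ker (koszulDiff x A i)) ∈ T :=
    mem_of_injective hT (ModuleCat.ofHom (LinearMap.ker (koszulDiff x A i)).subtype)
      (Submodule.injective_subtype _) h1
  exact mem_of_surjective hT (ModuleCat.ofHom (Submodule.mkQ _)) (Submodule.mkQ_surjective _) h2

lemma homology_mem_iff (M : Type u) [AddCommGroup M] [Module R M] (i : ℕ) :
    (kosC x M).homology i ∈ T ↔ ModuleCat.of R (koszulCohomology x M i) ∈ T :=
  ⟨fun h => hT.mem_of_iso (bIso (x := x) (M := M) i).symm h,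
   fun h => hT.mem_of_iso (bIso (x := x) (M := M) i) h⟩

lemma H0_mem (M : Type u) [AddCommGroup M] [Module R M] {z : R}
    (hz : z ∈ Ideal.span (Set.range x))
    (hreg : ModuleCat.of R ↥(LinearMap.ker (LinearMap.lsmul R M z)) ∈ T) :
    ModuleCat.of R (koszulCohomology x M 0) ∈ T := by
  have hgen : ∀ φ : ↥(LinearMap.ker (koszulDiff x M 0)), ∀ j : Fin r,
      x j • φ.1 ⟨∅, rfl⟩ = 0 := by
    intro φ j
    have h0 : koszulDiff x M 0 φ.1 = 0 := φ.2
    have h1 := koszulDiff_apply x M 0 φ.1 ⟨{j}, Finset.card_singleton j⟩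
    rw [h0] at h1
    rw [Finset.sum_singleton, Finset.erase_singleton,
      ext0_card _ (Finset.card_empty (α := Fin r))] at h1
    have heps : eps R {j} j = 1 := by
      unfold eps
      rw [Finset.filter_singleton, if_neg (lt_irrefl j), Finset.card_empty, pow_zero]
    rw [heps, one_mul] at h1
    exact h1.symm
  have hzkill : ∀ φ : ↥(LinearMap.ker (koszulDiff x M 0)), z • φ.1 ⟨∅, rfl⟩ = 0 := by
    intro φ
    obtain ⟨c, hc⟩ := (Submodule.mem_span_range_iff_exists_fun R).mp hz
    rw [← hc, Finset.sum_smul]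
    refine Finset.sum_eq_zero fun j _ => ?_
    rw [smul_eq_mul, mul_smul, hgen φ j, smul_zero]
  refine mem_of_surjective hT (ModuleCat.ofHom (Submodule.mkQ _)) (Submodule.mkQ_surjective _) ?_
  refine mem_of_injective hT (ModuleCat.ofHom (LinearMap.codRestrict
      (LinearMap.ker (LinearMap.lsmul R M z))
      ((LinearMap.proj (R := R) (⟨∅, rfl⟩ : {s : Finset (Fin r) // s.card = 0})).comp
        (LinearMap.ker (koszulDiff x M 0)).subtype)
      (fun φ => by rw [LinearMap.mem_ker]; exact hzkill φ))) ?_ hreg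
  intro φ ψ h
  have hsub : ∀ t : {s : Finset (Fin r) // s.card = 0},
      t = (⟨∅, rfl⟩ : {s : Finset (Fin r) // s.card = 0}) :=
    fun t => Subtype.ext (Finset.card_eq_zero.mp t.2)
  apply Subtype.ext
  funext t
  have h0 : φ.1 ⟨∅, rfl⟩ = ψ.1 ⟨∅, rfl⟩ := congrArg Subtype.val h
  rw [hsub t]
  exact h0

end KTorsion


----------------------------------------------------------------
-- the long exact sequence argument
----------------------------------------------------------------

section Main
open Pointwise
variable {T : Set (ModuleCat.{u} R)} (hT : IsTorsionTheory R T)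
variable (M : Type u) [AddCommGroup M] [Module R M] {z : R}

include hT

lemma key (hz : z ∈ Ideal.span (Set.range x))
    (hreg : ModuleCat.of R ↥(LinearMap.ker (LinearMap.lsmul R M z)) ∈ T) (i : ℕ) :
    (ModuleCat.of R (koszulCohomology x (M ⧸ Ideal.span {z} • (⊤ : Submodule R M)) i) ∈ T)
      ↔ (ModuleCat.of R (koszulCohomology x M i) ∈ T
          ∧ ModuleCat.of R (koszulCohomology x M (i+1)) ∈ T) := by
  classical
  set K := LinearMap.ker (LinearMap.lsmul R M z) with hK
  set I := Ideal.span {z} • (⊤ : Submodule R M) with hI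
  set p : M →ₗ[R] (M ⧸ K) := K.mkQ with hp
  set xb : (M ⧸ K) →ₗ[R] M := K.liftQ (LinearMap.lsmul R M z) le_rfl with hxb
  set q : M →ₗ[R] (M ⧸ I) := I.mkQ with hq
  have hrangexb : LinearMap.range xb = I := by
    rw [hxb, Submodule.range_liftQ, hI, Submodule.ideal_span_singleton_smul]
    ext m
    constructor
    · rintro ⟨a, rfl⟩
      exact Submodule.smul_mem_pointwise_smul a z ⊤ trivial
    · intro hm
      have hm' : m ∈ z • ((⊤ : Submodule R M) : Set M) := by
        rw [← Submodule.coe_pointwise_smul]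
        exact hm
      obtain ⟨a, -, rfl⟩ := hm'
      exact ⟨a, rfl⟩
  have hxb_inj : Function.Injective xb :=
    LinearMap.ker_eq_bot.mp (Submodule.ker_liftQ_eq_bot _ _ le_rfl le_rfl)
  have hxbp : xb.comp p = LinearMap.lsmul R M z := Submodule.liftQ_mkQ _ _ _
  -- short exact sequences of Koszul complexes
  have hS1 := kosSES (x := x) K.subtype p K.injective_subtype (Submodule.mkQ_surjective K)
    (by rw [Submodule.range_subtype, hp, Submodule.ker_mkQ])
  have hS2 := kosSES (x := x) xb q hxb_inj (Submodule.mkQ_surjective I)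
    (by rw [hrangexb, hq, Submodule.ker_mkQ])
  have hrel : ∀ j : ℕ, (ComplexShape.up ℕ).Rel j (j+1) := fun j => rfl
  -- homology maps
  set uK : ∀ j : ℕ, ((kosC x ↥K).homology j ⟶ (kosC x M).homology j) :=
    fun j => HomologicalComplex.homologyMap (kosMap x K.subtype) j with huK
  set pm : ∀ j : ℕ, ((kosC x M).homology j ⟶ (kosC x (M ⧸ K)).homology j) :=
    fun j => HomologicalComplex.homologyMap (kosMap x p) j with hpm
  set um : ∀ j : ℕ, ((kosC x (M ⧸ K)).homology j ⟶ (kosC x M).homology j) :=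
    fun j => HomologicalComplex.homologyMap (kosMap x xb) j with hum
  set qm : ∀ j : ℕ, ((kosC x M).homology j ⟶ (kosC x (M ⧸ I)).homology j) :=
    fun j => HomologicalComplex.homologyMap (kosMap x q) j with hqm
  set d1 : ∀ j : ℕ, ((kosC x (M ⧸ K)).homology j ⟶ (kosC x ↥K).homology (j+1)) :=
    fun j => hS1.δ j (j+1) (hrel j) with hd1
  set d2 : ∀ j : ℕ, ((kosC x (M ⧸ I)).homology j ⟶ (kosC x (M ⧸ K)).homology (j+1)) :=
    fun j => hS2.δ j (j+1) (hrel j) with hd2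
  -- multiplication by z vanishes on homology
  have hpu : ∀ j : ℕ, ∀ w, um j (pm j w) = 0 := by
    intro j w
    have hcomp : kosMap x p ≫ kosMap x xb = kosMap x (LinearMap.lsmul R M z) := by
      rw [← kosMap_comp, hxbp]
    have h0 : pm j ≫ um j = 0 := by
      rw [hpm, hum, ← HomologicalComplex.homologyMap_comp, hcomp,
        homologyMap_lsmul_eq_zero x M hz j]
    have := congrArg (fun (F : (kosC x M).homology j ⟶ (kosC x M).homology j) => F w) h0
    simpa using this
  -- homology of the torsion part is torsion
  have hAmem : ∀ j : ℕ, (kosC x ↥K).homology j ∈ T :=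
    fun j => (homology_mem_iff (x := x) hT ↥K j).mpr (koszulCohomology_mem (x := x) hT hreg j)
  -- exactness facts, elementwise
  have hex1 : ∀ j : ℕ, ∀ b, pm j b = 0 → b ∈ LinearMap.range (uK j).hom := by
    intro j b hb
    obtain ⟨a, ha⟩ := (ShortComplex.moduleCat_exact_iff _).mp (hS1.homology_exact₂ j) b hb
    exact ⟨a, ha⟩
  have hex1' : ∀ j : ℕ, ∀ b, d1 j b = 0 → b ∈ LinearMap.range (pm j).hom := by
    intro j b hb
    obtain ⟨a, ha⟩ :=
      (ShortComplex.moduleCat_exact_iff _).mp (hS1.homology_exact₃ j (j+1) (hrel j)) b hb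
    exact ⟨a, ha⟩
  have hex2 : ∀ j : ℕ, ∀ b, qm j b = 0 → b ∈ LinearMap.range (um j).hom := by
    intro j b hb
    obtain ⟨a, ha⟩ := (ShortComplex.moduleCat_exact_iff _).mp (hS2.homology_exact₂ j) b hb
    exact ⟨a, ha⟩
  have hex2' : ∀ j : ℕ, ∀ b, d2 j b = 0 → b ∈ LinearMap.range (qm j).hom := by
    intro j b hb
    obtain ⟨a, ha⟩ :=
      (ShortComplex.moduleCat_exact_iff _).mp (hS2.homology_exact₃ j (j+1) (hrel j)) b hb
    exact ⟨a, ha⟩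
  have hex2'' : ∀ j : ℕ, ∀ b, um (j+1) b = 0 → b ∈ LinearMap.range (d2 j).hom := by
    intro j b hb
    obtain ⟨a, ha⟩ :=
      (ShortComplex.moduleCat_exact_iff _).mp (hS2.homology_exact₁ j (j+1) (hrel j)) b hb
    exact ⟨a, ha⟩
  have hcd1 : ∀ j : ℕ, ∀ b, d1 j (pm j b) = 0 := by
    intro j b
    have h0 : pm j ≫ d1 j = 0 := hS1.comp_δ j (j+1) (hrel j)
    have := congrArg (fun (F : (kosC x M).homology j ⟶ (kosC x ↥K).homology (j+1)) => F b) h0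
    simpa using this
  -- cokernel of pm is torsion
  have hcoker : ∀ j : ℕ,
      ModuleCat.of R (((kosC x (M ⧸ K)).homology j) ⧸ LinearMap.range (pm j).hom) ∈ T := by
    intro j
    have hle : LinearMap.range (pm j).hom ≤ LinearMap.ker (d1 j).hom := by
      rintro b ⟨a, rfl⟩
      exact hcd1 j a
    refine mem_of_injective hT
      (ModuleCat.ofHom ((LinearMap.range (pm j).hom).liftQ (d1 j).hom hle)) ?_ (hAmem (j+1))
    rw [← LinearMap.ker_eq_bot, eq_bot_iff]
    rintro a ha
    obtain ⟨w, rfl⟩ := (LinearMap.range (pm j).hom).mkQ_surjective a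
    have hd : d1 j w = 0 := by
      have hcw := LinearMap.mem_ker.mp ha
      change (d1 j).hom w = 0
      rw [← Submodule.liftQ_mkQ (LinearMap.range (pm j).hom) (d1 j).hom hle, LinearMap.comp_apply]
      exact hcw
    simp only [SetLike.mem_coe, Submodule.mem_bot, Submodule.mkQ_apply]
    exact (Submodule.Quotient.mk_eq_zero _).mpr (hex1' j w hd)
  -- H_j(M) torsion iff H_j(M/K) torsion
  have he1 : ∀ j : ℕ, ((kosC x M).homology j ∈ T ↔ (kosC x (M ⧸ K)).homology j ∈ T) := by
    intro j
    constructor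
    · intro hM
      refine hT.ext_mem (N := (kosC x (M ⧸ K)).homology j) (LinearMap.range (pm j).hom) ?_ ?_
      · exact mem_of_surjective hT (ModuleCat.ofHom (pm j).hom.rangeRestrict)
          (pm j).hom.surjective_rangeRestrict hM
      · exact hcoker j
    · intro hN
      exact mem_of_exact hT (uK j) (pm j) (hAmem j) hN (hex1 j)
  -- the image of um is torsion
  have hrangeu : ∀ j : ℕ, ModuleCat.of R ↥(LinearMap.range (um j).hom) ∈ T := by
    intro j
    have hle : LinearMap.range (pm j).hom ≤ LinearMap.ker (um j).hom := by
      rintro b ⟨a, rfl⟩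
      exact hpu j a
    have hmem := mem_of_surjective hT
      (ModuleCat.ofHom ((LinearMap.range (pm j).hom).liftQ (um j).hom hle).rangeRestrict)
      ((LinearMap.range (pm j).hom).liftQ (um j).hom hle).surjective_rangeRestrict (hcoker j)
    rwa [Submodule.range_liftQ] at hmem
  constructor
  · intro hQ
    have hQ' : (kosC x (M ⧸ I)).homology i ∈ T := (homology_mem_iff (x := x) hT _ i).mpr hQ
    have hMi : (kosC x M).homology i ∈ T := by
      refine hT.ext_mem (N := (kosC x M).homology i) (LinearMap.ker (qm i).hom) ?_ ?_
      · have hle : LinearMap.ker (qm i).hom ≤ LinearMap.range (um i).hom := fun b hb => hex2 i b hb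
        exact mem_of_injective hT (ModuleCat.ofHom (Submodule.inclusion hle))
          (Submodule.inclusion_injective hle) (hrangeu i)
      · exact mem_of_injective hT
          (ModuleCat.ofHom ((LinearMap.ker (qm i).hom).liftQ (qm i).hom le_rfl))
          (by rw [← LinearMap.ker_eq_bot]
              exact Submodule.ker_liftQ_eq_bot _ _ le_rfl le_rfl) hQ'
    have hNi1 : (kosC x (M ⧸ K)).homology (i+1) ∈ T := by
      refine hT.ext_mem (N := (kosC x (M ⧸ K)).homology (i+1))
        (LinearMap.ker (um (i+1)).hom) ?_ ?_
      · have hle : LinearMap.ker (um (i+1)).hom ≤ LinearMap.range (d2 i).hom :=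
          fun b hb => hex2'' i b hb
        have hrd2 : ModuleCat.of R ↥(LinearMap.range (d2 i).hom) ∈ T :=
          mem_of_surjective hT (ModuleCat.ofHom (d2 i).hom.rangeRestrict)
            (d2 i).hom.surjective_rangeRestrict hQ'
        exact mem_of_injective hT (ModuleCat.ofHom (Submodule.inclusion hle))
          (Submodule.inclusion_injective hle) hrd2
      · have hle2 : LinearMap.range (pm (i+1)).hom ≤ LinearMap.ker (um (i+1)).hom := by
          rintro b ⟨a, rfl⟩
          exact hpu (i+1) a
        have hle2' : LinearMap.range (pm (i+1)).hom
            ≤ LinearMap.ker ((LinearMap.ker (um (i+1)).hom).mkQ) := by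
          rw [Submodule.ker_mkQ]
          exact hle2
        have hsur : Function.Surjective
            ((LinearMap.range (pm (i+1)).hom).liftQ ((LinearMap.ker (um (i+1)).hom).mkQ) hle2') := by
          intro b
          obtain ⟨m, rfl⟩ := (LinearMap.ker (um (i+1)).hom).mkQ_surjective b
          refine ⟨(LinearMap.range (pm (i+1)).hom).mkQ m, ?_⟩
          rw [← LinearMap.comp_apply, Submodule.liftQ_mkQ]
        exact mem_of_surjective hT (ModuleCat.ofHom
          ((LinearMap.range (pm (i+1)).hom).liftQ ((LinearMap.ker (um (i+1)).hom).mkQ) hle2'))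
          hsur (hcoker (i+1))
    exact ⟨(homology_mem_iff (x := x) hT M i).mp hMi,
      (homology_mem_iff (x := x) hT M (i+1)).mp ((he1 (i+1)).mpr hNi1)⟩
  · rintro ⟨hMi, hMi1⟩
    have hMi' := (homology_mem_iff (x := x) hT M i).mpr hMi
    have hNi1 : (kosC x (M ⧸ K)).homology (i+1) ∈ T :=
      (he1 (i+1)).mp ((homology_mem_iff (x := x) hT M (i+1)).mpr hMi1)
    refine (homology_mem_iff (x := x) hT _ i).mp ?_
    exact mem_of_exact hT (qm i) (d2 i) hMi' hNi1 (hex2' i)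

end Main
end TKaux

namespace TKaux

lemma tkgrade_arith (f g : ℕ → Prop) (h0 : f 0) (hfg : ∀ i, g i ↔ (f i ∧ f (i+1))) :
    sInf ((↑· : ℕ → ℕ∞) '' {i | ¬ f i}) = sInf ((↑· : ℕ → ℕ∞) '' {i | ¬ g i}) + 1 := by
  classical
  by_cases hg : ∀ i, g i
  · have hf : ∀ i, f i := by
      intro i
      induction i with
      | zero => exact h0
      | succ n _ => exact ((hfg n).mp (hg n)).2
    have e1 : {i | ¬ f i} = (∅ : Set ℕ) :=
      Set.eq_empty_iff_forall_notMem.mpr fun i hi => hi (hf i)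
    have e2 : {i | ¬ g i} = (∅ : Set ℕ) :=
      Set.eq_empty_iff_forall_notMem.mpr fun i hi => hi (hg i)
    rw [e1, e2, Set.image_empty, sInf_empty, top_add]
  · push_neg at hg
    have hmin : ∀ m, m < Nat.find hg → g m := fun m hm => not_not.mp (Nat.find_min hg hm)
    have hfle : ∀ m, m ≤ Nat.find hg → f m := by
      intro m
      induction m with
      | zero => exact fun _ => h0
      | succ n _ =>
        intro hn
        exact ((hfg n).mp (hmin n (lt_of_lt_of_le (Nat.lt_succ_self n) hn))).2
    have hf1 : ¬ f (Nat.find hg + 1) := fun h =>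
      Nat.find_spec hg ((hfg _).mpr ⟨hfle _ le_rfl, h⟩)
    have hL : sInf ((↑· : ℕ → ℕ∞) '' {i | ¬ f i}) = ((Nat.find hg + 1 : ℕ) : ℕ∞) := by
      apply le_antisymm
      · exact sInf_le ⟨_, hf1, rfl⟩
      · refine le_sInf ?_
        rintro b ⟨k, hk, rfl⟩
        have hkk : Nat.find hg + 1 ≤ k := by
          by_contra hlt
          push_neg at hlt
          exact hk (hfle k (Nat.lt_succ_iff.mp hlt))
        show ((Nat.find hg + 1 : ℕ) : ℕ∞) ≤ (k : ℕ∞)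
        exact_mod_cast hkk
    have hR : sInf ((↑· : ℕ → ℕ∞) '' {i | ¬ g i}) = ((Nat.find hg : ℕ) : ℕ∞) := by
      apply le_antisymm
      · exact sInf_le ⟨_, Nat.find_spec hg, rfl⟩
      · refine le_sInf ?_
        rintro b ⟨k, hk, rfl⟩
        show ((Nat.find hg : ℕ) : ℕ∞) ≤ (k : ℕ∞)
        exact_mod_cast Nat.find_min' hg hk
    rw [hL, hR]
    push_cast
    rfl

end TKaux


/-- **Theorem.** Let `𝔗` be a torsion theory, `𝔞` a finitely generated ideal of `R`
(generated by `y₁, …, y_r`) and `M` an `R`-module. If `x ∈ 𝔞` is a weak `M`-regular element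
with respect to `𝔗` (i.e. `(0 :_M x) ∈ 𝔗`), then
`𝔗-Kgrade_R(𝔞, M) = 𝔗-Kgrade_R(𝔞, M/xM) + 1`. -/
theorem tKgrade_eq_tKgrade_quotient_add_one (T : Set (ModuleCat.{u} R))
    (hT : IsTorsionTheory R T) (a : Ideal R) (M : Type u) [AddCommGroup M] [Module R M]
    {r : ℕ} (y : Fin r → R) (hy : Ideal.span (Set.range y) = a)
    (x : R) (hxa : x ∈ a)
    (hreg : ModuleCat.of R ↥(LinearMap.ker (LinearMap.lsmul R M x)) ∈ T) :
    TKgrade T y M = TKgrade T y (M ⧸ (Ideal.span {x} • (⊤ : Submodule R M))) + 1 := by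
  
  have hz : x ∈ Ideal.span (Set.range y) := by rw [hy]; exact hxa
  unfold TKgrade
  exact TKaux.tkgrade_arith
    (fun i => ModuleCat.of R (koszulCohomology y M i) ∈ T)
    (fun i => ModuleCat.of R
      (koszulCohomology y (M ⧸ Ideal.span {x} • (⊤ : Submodule R M)) i) ∈ T)
    (TKaux.H0_mem (x := y) hT M hz hreg)
    (fun i => TKaux.key (x := y) hT M hz hreg i)
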